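/- arXiv:2005.09108 — 2 statements merged into one kernel-verified Lean document; each statement's English description precedes it below -/
import Mathlib

section
/- Any positive solution α of tan(α·lₓ) = u(α) lying in (0, π/(2lₓ)) must satisfy α < √(κr·κd/(D(κr+κa))), when D, lₓ, κr, κa, κd > 0. Equivalently: if α ∈ (0, π/(2lₓ)) and α ≥ √(κr·κd/(D(κr+κa))) with α below the pole α₂ = √(κr·κa+κd·D)/D, then tan(α·lₓ) ≠ u(α), since tan(α·lₓ) > 0 while u(α) ≤ 0 on [√(κr·κd/(D(κr+κa))), α₂). -/
open Real

theorem no_solution_above_numerator_root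
    (D lx κr κa κd : ℝ)
    (hD : 0 < D) (hlx : 0 < lx) (hκr : 0 < κr) (hκa : 0 < κa) (hκd : 0 < κd)
    (hlt : Real.sqrt (κr * κd / (D * (κr + κa))) < Real.sqrt (κr * κa + κd * D) / D) :
    ∀ α : ℝ, 0 < α → α < Real.pi / (2 * lx) →
      Real.sqrt (κr * κd / (D * (κr + κa))) ≤ α →
      α < Real.sqrt (κr * κa + κd * D) / D →
      Real.tan (α * lx) ≠
        (α ^ 2 * D * (κr + κa) - κr * κd) / (α * (α ^ 2 * D ^ 2 - (κr * κa + κd * D))) := by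
  intro α hα hαπ hge hlt2
  have htanpos : 0 < Real.tan (α * lx) := by
    apply Real.tan_pos_of_pos_of_lt_pi_div_two (by positivity)
    have : α * (2 * lx) < Real.pi := by
      rw [← lt_div_iff₀ (by positivity)]; exact hαπ
    linarith
  have hx1 : 0 ≤ κr * κd / (D * (κr + κa)) := by positivity
  have hsq1 : Real.sqrt (κr * κd / (D * (κr + κa))) ^ 2 = κr * κd / (D * (κr + κa)) :=
    Real.sq_sqrt hx1
  have h1 : κr * κd / (D * (κr + κa)) ≤ α ^ 2 := by
    nlinarith [Real.sqrt_nonneg (κr * κd / (D * (κr + κa)))]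
  have hnum : 0 ≤ α ^ 2 * D * (κr + κa) - κr * κd := by
    rw [div_le_iff₀ (by positivity)] at h1
    nlinarith
  have hx2 : 0 ≤ κr * κa + κd * D := by positivity
  have hsq2 : Real.sqrt (κr * κa + κd * D) ^ 2 = κr * κa + κd * D := Real.sq_sqrt hx2
  have hαD : α * D < Real.sqrt (κr * κa + κd * D) := by
    rw [lt_div_iff₀ hD] at hlt2; exact hlt2
  have hden : α * (α ^ 2 * D ^ 2 - (κr * κa + κd * D)) < 0 := by
    have : α ^ 2 * D ^ 2 < κr * κa + κd * D := by
      nlinarith [mul_self_lt_mul_self (mul_pos hα hD).le hαD]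
    nlinarith
  have hq : (α ^ 2 * D * (κr + κa) - κr * κd) / (α * (α ^ 2 * D ^ 2 - (κr * κa + κd * D))) ≤ 0 :=
    div_nonpos_of_nonneg_of_nonpos hnum hden.le
  intro heq
  rw [heq] at htanpos
  linarith
end

section
/- Suppose β₁ > 0 satisfies tan(β₁·l_y) = v(β₁) with v(β) = β·D·(κ₁y+κ₂y)/(β²D² − κ₁y·κ₂y), where D, l_y, κ₁y, κ₂y > 0. If β₍₁₎ := √(κ₁y·κ₂y)/D < π/(2l_y) and β₁ is the smallest positive solution, then β₍₁₎ < β₁ < π/(2l_y). In particular there is no solution in (0, β₍₁₎] because tan(β·l_y) > 0 and v(β) < 0 there. -/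
open Real Set

set_option maxHeartbeats 1000000 in
theorem beta1_reaction_limited_bounds
    (D ly κ1y κ2y β₁ : ℝ)
    (hD : 0 < D) (hly : 0 < ly) (hκ1 : 0 < κ1y) (hκ2 : 0 < κ2y)
    (hpole : Real.sqrt (κ1y * κ2y) / D < Real.pi / (2 * ly))
    (hleast : IsLeast {β : ℝ | 0 < β ∧
        Real.tan (β * ly) = β * D * (κ1y + κ2y) / (β ^ 2 * D ^ 2 - κ1y * κ2y)} β₁) :
    Real.sqrt (κ1y * κ2y) / D < β₁ ∧ β₁ < Real.pi / (2 * ly) ∧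
      ∀ β ∈ Ioc (0 : ℝ) (Real.sqrt (κ1y * κ2y) / D),
        Real.tan (β * ly) ≠ β * D * (κ1y + κ2y) / (β ^ 2 * D ^ 2 - κ1y * κ2y) := by
  obtain ⟨⟨hβ₁pos, hβ₁eq⟩, hmin⟩ := hleast
  set s := Real.sqrt (κ1y * κ2y) / D with hs
  clear_value s
  have hκκ : 0 < κ1y * κ2y := mul_pos hκ1 hκ2
  have hspos : 0 < s := hs ▸ div_pos (Real.sqrt_pos.2 hκκ) hD
  have hsD : s * D = Real.sqrt (κ1y * κ2y) := by rw [hs]; exact div_mul_cancel₀ _ hD.ne'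
  have hsq : Real.sqrt (κ1y * κ2y) ^ 2 = κ1y * κ2y := Real.sq_sqrt hκκ.le
  have hsD2 : s ^ 2 * D ^ 2 = κ1y * κ2y := by rw [← hsq, ← hsD]; ring
  have hsly : s * ly < Real.pi / 2 := by
    rw [← div_div] at hpole
    exact (lt_div_iff₀ hly).1 hpole
  -- third part
  have key : ∀ β ∈ Ioc (0 : ℝ) s,
      Real.tan (β * ly) ≠ β * D * (κ1y + κ2y) / (β ^ 2 * D ^ 2 - κ1y * κ2y) := by
    rintro β ⟨hβ0, hβs⟩
    have hβly : β * ly ≤ s * ly := by nlinarith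
    have htan : 0 < Real.tan (β * ly) :=
      Real.tan_pos_of_pos_of_lt_pi_div_two (by positivity) (lt_of_le_of_lt hβly hsly)
    have hden : β ^ 2 * D ^ 2 - κ1y * κ2y ≤ 0 := by nlinarith [hsD2, sq_nonneg D, mul_le_mul hβs hβs hβ0.le hspos.le]
    have hrhs : β * D * (κ1y + κ2y) / (β ^ 2 * D ^ 2 - κ1y * κ2y) ≤ 0 :=
      div_nonpos_of_nonneg_of_nonpos (by positivity) hden
    exact fun h => absurd (h ▸ htan) (not_lt.2 hrhs)
  have h1 : s < β₁ := by
    by_contra h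
    exact key β₁ ⟨hβ₁pos, not_lt.1 h⟩ hβ₁eq
  refine ⟨h1, ?_, key⟩
  -- second part: exhibit a solution below π/(2 ly)
  set p := Real.pi / (2 * ly) with hp
  clear_value p
  have hsp : s < p := hpole
  set g : ℝ → ℝ := fun β =>
    Real.sin (β * ly) * (β ^ 2 * D ^ 2 - κ1y * κ2y)
      - Real.cos (β * ly) * (β * D * (κ1y + κ2y)) with hg
  clear_value g
  have hgc : Continuous g := by rw [hg]; fun_prop
  have hply : p * ly = Real.pi / 2 := by
    field_simp [hp]
    rw [hp, div_mul_eq_mul_div, div_mul_eq_mul_div, div_eq_iff (by positivity)]; ring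
  have hgs : g s < 0 := by
    have hcos : 0 < Real.cos (s * ly) :=
      Real.cos_pos_of_mem_Ioo ⟨by nlinarith [Real.pi_pos], hsly⟩
    have : g s = - (Real.cos (s * ly) * (s * D * (κ1y + κ2y))) := by
      simp only [hg, hsD2]
      ring
    rw [this]
    have : 0 < Real.cos (s * ly) * (s * D * (κ1y + κ2y)) := by positivity
    linarith
  have hgp : 0 < g p := by
    have : g p = p ^ 2 * D ^ 2 - κ1y * κ2y := by
      simp only [hg, hply, Real.sin_pi_div_two, Real.cos_pi_div_two]
      ring
    rw [this]
    nlinarith [hsD2, mul_pos hD hD, mul_lt_mul'' hsp hsp hspos.le hspos.le]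
  have h0 : (0 : ℝ) ∈ Ioo (g s) (g p) := ⟨hgs, hgp⟩
  obtain ⟨β, ⟨hβs, hβp⟩, hβ0⟩ := intermediate_value_Ioo hsp.le hgc.continuousOn h0
  have hβpos : 0 < β := hspos.trans hβs
  have hcos : 0 < Real.cos (β * ly) := by
    refine Real.cos_pos_of_mem_Ioo ⟨by nlinarith [Real.pi_pos], ?_⟩
    rw [← hply]; nlinarith
  have hden : 0 < β ^ 2 * D ^ 2 - κ1y * κ2y := by nlinarith [hsD2, mul_pos hD hD, mul_lt_mul'' hβs hβs hspos.le hspos.le]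
  have hsol : Real.tan (β * ly) = β * D * (κ1y + κ2y) / (β ^ 2 * D ^ 2 - κ1y * κ2y) := by
    rw [Real.tan_eq_sin_div_cos, div_eq_div_iff hcos.ne' hden.ne']
    simp only [hg] at hβ0
    linarith [hβ0]
  have : β₁ ≤ β := hmin ⟨hβpos, hsol⟩
  linarith
end
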